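/- Let I ⊂ ℝ be a compact interval, let G : I → ℝ be twice continuously differentiable, and suppose 0 < A₁ ≤ |G''(x)| ≤ A₂ for all x ∈ I. Suppose x₀ ∈ I satisfies G'(x₀) = 0. Then for every x ∈ I one has (2A₁²/A₂)·|G(x) − G(x₀)| ≤ G'(x)² ≤ (2A₂²/A₁)·|G(x) − G(x₀)|. -/

import Mathlib

open MeasureTheory Set

/-- MVT with unordered endpoints. -/
lemma mvt_unordered (f f' : ℝ → ℝ) (p q : ℝ) (hne : p ≠ q)
    (hf : ∀ t, HasDerivAt f (f' t) t) :
    ∃ c ∈ Ioo (min p q) (max p q), f' c = (f q - f p) / (q - p) := by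
  rcases lt_or_gt_of_ne hne with h | h
  · have := exists_hasDerivAt_eq_slope f f' h
      (fun t _ => (hf t).continuousAt.continuousWithinAt) (fun t _ => hf t)
    obtain ⟨c, hc, hceq⟩ := this
    exact ⟨c, by simpa [min_eq_left h.le, max_eq_right h.le] using hc, hceq⟩
  · have := exists_hasDerivAt_eq_slope f f' h
      (fun t _ => (hf t).continuousAt.continuousWithinAt) (fun t _ => hf t)
    obtain ⟨c, hc, hceq⟩ := this
    refine ⟨c, by simpa [min_eq_right h.le, max_eq_left h.le] using hc, ?_⟩
    rw [hceq]
    rw [div_eq_div_iff (by linarith) (by intro h0; apply hne; linarith)]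
    ring

lemma mem_Icc_of_between {a b p q c : ℝ} (hp : p ∈ Icc a b) (hq : q ∈ Icc a b)
    (hc : c ∈ Ioo (min p q) (max p q)) : c ∈ Icc a b :=
  ⟨le_trans (le_min hp.1 hq.1) hc.1.le, le_trans hc.2.le (max_le hp.2 hq.2)⟩

lemma taylor_key (a b : ℝ) (G : ℝ → ℝ) (hG : ContDiff ℝ 2 G)
    (x₀ x : ℝ) (hx₀ : x₀ ∈ Icc a b) (hx : x ∈ Icc a b)
    (hcrit : deriv G x₀ = 0) (hne : x ≠ x₀) :
    (∃ d ∈ Icc a b, G x - G x₀ = deriv (deriv G) d * (x - x₀) ^ 2 / 2) ∧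
    (∃ e ∈ Icc a b, deriv G x = deriv (deriv G) e * (x - x₀)) := by
  have hG2 : ContDiff ℝ (1 + 1) G := by norm_num at hG ⊢; exact hG
  have hd0 : Differentiable ℝ G := hG.differentiable (by norm_num)
  have h1 : ContDiff ℝ 1 (deriv G) := (contDiff_succ_iff_deriv.mp hG2).2.2
  have hd1 : Differentiable ℝ (deriv G) := h1.differentiable one_ne_zero
  constructor
  · -- Taylor via double Rolle
    set K : ℝ := 2 * (G x - G x₀) / (x - x₀) ^ 2 with hK
    have hxne : x - x₀ ≠ 0 := sub_ne_zero.mpr hne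
    set φ : ℝ → ℝ := fun t => G t - G x₀ - K * (t - x₀) ^ 2 / 2 with hφ
    have hφ' : ∀ t, HasDerivAt φ (deriv G t - K * (t - x₀)) t := by
      intro t
      have h2 : HasDerivAt (fun t : ℝ => K * (t - x₀) ^ 2 / 2) (K * (t - x₀)) t := by
        have := ((((hasDerivAt_id t).sub_const x₀).pow 2).const_mul K).div_const 2
        refine this.congr_deriv ?_
        norm_num
        ring
      exact (((hd0 t).hasDerivAt).sub_const (G x₀)).sub h2
    have hφx : φ x = 0 := by
      simp only [hφ, hK]
      field_simp
      simp
    have hφx₀ : φ x₀ = 0 := by simp [hφ]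
    obtain ⟨c, hc, hceq⟩ := mvt_unordered φ (fun t => deriv G t - K * (t - x₀)) x₀ x
      (Ne.symm hne) hφ'
    have hcmem : c ∈ Icc a b := mem_Icc_of_between hx₀ hx hc
    have hcne : c ≠ x₀ := by
      intro h
      rcases lt_or_gt_of_ne hne with hlt | hlt
      · rw [min_eq_right hlt.le, max_eq_left hlt.le] at hc; exact absurd h (ne_of_lt hc.2)
      · rw [min_eq_left hlt.le, max_eq_right hlt.le] at hc; exact absurd h (ne_of_gt hc.1)
    have hslope0 : deriv G c - K * (c - x₀) = 0 := by
      rw [hceq, hφx, hφx₀]; simp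
    -- second Rolle between x₀ and c on ψ = deriv G t - K*(t - x₀)
    obtain ⟨d, hd, hdeq⟩ := mvt_unordered (fun t => deriv G t - K * (t - x₀))
      (fun t => deriv (deriv G) t - K) x₀ c (Ne.symm hcne)
      (fun t => ((hd1 t).hasDerivAt).sub (by simpa using ((hasDerivAt_id t).sub_const x₀).const_mul K))
    have hdmem : d ∈ Icc a b := mem_Icc_of_between hx₀ hcmem hd
    have hKd : deriv (deriv G) d = K := by
      have : ((deriv G c - K * (c - x₀)) - (deriv G x₀ - K * (x₀ - x₀))) / (c - x₀) = 0 := by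
        rw [hslope0, hcrit]; simp
      have := hdeq.trans this
      linarith
    refine ⟨d, hdmem, ?_⟩
    rw [hKd, hK]
    field_simp
  · obtain ⟨e, he, heq⟩ := mvt_unordered (deriv G) (deriv (deriv G)) x₀ x (Ne.symm hne)
      (fun t => (hd1 t).hasDerivAt)
    refine ⟨e, mem_Icc_of_between hx₀ hx he, ?_⟩
    rw [heq, hcrit, sub_zero, div_mul_eq_mul_div, mul_div_assoc,
      div_self (sub_ne_zero.mpr hne), mul_one]

/-- If `0 < A₁ ≤ |G''| ≤ A₂` on the compact interval `[a,b]` and `G'(x₀) = 0`,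
then `(2A₁²/A₂)|G(x) - G(x₀)| ≤ G'(x)² ≤ (2A₂²/A₁)|G(x) - G(x₀)|` on `[a,b]`. -/
theorem deriv_sq_comparable_near_critical_point
    (a b : ℝ) (hab : a ≤ b)
    (G : ℝ → ℝ) (hG : ContDiff ℝ 2 G)
    (A₁ A₂ : ℝ) (hA₁ : 0 < A₁)
    (hbound : ∀ x ∈ Icc a b, A₁ ≤ |deriv (deriv G) x| ∧ |deriv (deriv G) x| ≤ A₂)
    (x₀ : ℝ) (hx₀ : x₀ ∈ Icc a b) (hcrit : deriv G x₀ = 0) :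
    ∀ x ∈ Icc a b,
      2 * A₁ ^ 2 / A₂ * |G x - G x₀| ≤ (deriv G x) ^ 2 ∧
      (deriv G x) ^ 2 ≤ 2 * A₂ ^ 2 / A₁ * |G x - G x₀| := by
  intro x hx
  have hA₂ : 0 < A₂ := lt_of_lt_of_le hA₁ (le_trans (hbound x₀ hx₀).1 (hbound x₀ hx₀).2)
  by_cases hne : x = x₀
  · subst hne; simp [hcrit]
  · obtain ⟨⟨d, hdmem, hd⟩, ⟨e, hemem, he⟩⟩ :=
      taylor_key a b G hG x₀ x hx₀ hx hcrit hne
    obtain ⟨hd1, hd2⟩ := hbound d hdmem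
    obtain ⟨he1, he2⟩ := hbound e hemem
    have habsG : |G x - G x₀| = |deriv (deriv G) d| * (x - x₀) ^ 2 / 2 := by
      rw [hd, abs_div, abs_mul, abs_pow, sq_abs]
      norm_num
    have hsq : (deriv G x) ^ 2 = (deriv (deriv G) e) ^ 2 * (x - x₀) ^ 2 := by
      rw [he]; ring
    have hsqe : (deriv (deriv G) e) ^ 2 = |deriv (deriv G) e| ^ 2 := (sq_abs _).symm
    have hx2 : (0:ℝ) ≤ (x - x₀) ^ 2 := sq_nonneg _
    constructor
    · rw [habsG, hsq, hsqe, div_mul_eq_mul_div, div_le_iff₀ hA₂]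
      nlinarith [mul_le_mul_of_nonneg_right (mul_le_mul he1 he1 hA₁.le (abs_nonneg _))
          (mul_nonneg hA₂.le hx2),
        mul_le_mul_of_nonneg_left (mul_le_mul_of_nonneg_right hd2 hx2)
          (by positivity : (0:ℝ) ≤ A₁ ^ 2)]
    · rw [habsG, hsq, hsqe, div_mul_eq_mul_div, le_div_iff₀ hA₁]
      nlinarith [mul_le_mul_of_nonneg_right (mul_le_mul he2 he2 (abs_nonneg _) hA₂.le)
          (mul_nonneg hx2 hA₁.le),
        mul_le_mul_of_nonneg_left hd1 (by positivity : (0:ℝ) ≤ A₂ ^ 2 * (x - x₀) ^ 2)]
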